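/- For z : ℤ, the following are equivalent: (i) for all a₁ a₂ b₁ b₂ : ℤ, if a₁*b₁ - a₂*b₂ = 0 and a₁*b₂ + a₂*b₁ + z*a₂*b₂ = 0, then (a₁ = 0 ∧ a₂ = 0) or (b₁ = 0 ∧ b₂ = 0); (ii) z ≠ 2 and z ≠ -2. (That is, the z-ring has no zero divisors, i.e. is an integral domain, if and only if z ∉ {-2, 2}.) -/
import Mathlib

lemma norm_zero_aux (z a₁ a₂ : ℤ) (h2 : z ≠ 2) (h2' : z ≠ -2)
    (h : a₁^2 + z*a₁*a₂ + a₂^2 = 0) : a₁ = 0 ∧ a₂ = 0 := by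
  by_cases ha : a₂ = 0
  · subst ha
    have : a₁^2 = 0 := by linarith
    exact ⟨pow_eq_zero_iff (by norm_num) |>.mp this, rfl⟩
  · exfalso
    have key : (2*a₁ + z*a₂)^2 = a₂^2 * (z^2 - 4) := by linear_combination 4*h
    have hdvd : a₂^2 ∣ (2*a₁ + z*a₂)^2 := ⟨z^2 - 4, key⟩
    have hdvd' : a₂ ∣ 2*a₁ + z*a₂ := (Int.pow_dvd_pow_iff two_ne_zero).mp hdvd
    obtain ⟨n, hn⟩ := hdvd'
    have hn2 : n^2 = z^2 - 4 := by
      have h' : a₂^2 * n^2 = a₂^2 * (z^2 - 4) := by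
        rw [← mul_pow, ← hn]; exact key
      exact mul_left_cancel₀ (pow_ne_zero 2 ha) h'
    have h4 : (z - n) * (z + n) = 4 := by linear_combination -hn2
    have hu : z - n ∣ 4 := ⟨z + n, h4.symm⟩
    have hv : z + n ∣ 4 := ⟨z - n, by rw [mul_comm]; exact h4.symm⟩
    have b1 : z - n ≤ 4 := Int.le_of_dvd (by norm_num) hu
    have b2 : -(z - n) ≤ 4 := Int.le_of_dvd (by norm_num) ((neg_dvd).mpr hu)
    have b3 : z + n ≤ 4 := Int.le_of_dvd (by norm_num) hv
    have b4 : -(z + n) ≤ 4 := Int.le_of_dvd (by norm_num) ((neg_dvd).mpr hv)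
    have hzl : -4 ≤ z := by linarith
    have hzu : z ≤ 4 := by linarith
    have hnl : -4 ≤ n := by linarith
    have hnu : n ≤ 4 := by linarith
    interval_cases z <;> interval_cases n <;> omega

theorem stmt1 (z : ℤ) :
    (∀ a₁ a₂ b₁ b₂ : ℤ,
      a₁ * b₁ - a₂ * b₂ = 0 → a₁ * b₂ + a₂ * b₁ + z * a₂ * b₂ = 0 →
        (a₁ = 0 ∧ a₂ = 0) ∨ (b₁ = 0 ∧ b₂ = 0)) ↔
    (z ≠ 2 ∧ z ≠ -2) := by
  constructor
  · intro h
    constructor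
    · rintro rfl
      have := h (-1) 1 (-1) 1 (by norm_num) (by norm_num)
      simp at this
    · rintro rfl
      have := h 1 1 1 1 (by norm_num) (by norm_num)
      simp at this
  · rintro ⟨h2, h2'⟩ a₁ a₂ b₁ b₂ e1 e2
    have hn : (a₁^2 + z*a₁*a₂ + a₂^2) * (b₁^2 + z*b₁*b₂ + b₂^2) = 0 := by
      have : (a₁^2 + z*a₁*a₂ + a₂^2) * (b₁^2 + z*b₁*b₂ + b₂^2) =
          (a₁*b₁ - a₂*b₂)^2 + z*(a₁*b₁ - a₂*b₂)*(a₁*b₂ + a₂*b₁ + z*a₂*b₂)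
            + (a₁*b₂ + a₂*b₁ + z*a₂*b₂)^2 := by ring
      rw [this, e1, e2]; ring
    rcases mul_eq_zero.mp hn with h | h
    · exact Or.inl (norm_zero_aux z a₁ a₂ h2 h2' h)
    · exact Or.inr (norm_zero_aux z b₁ b₂ h2 h2' h)
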